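/- Let T be a rooted directed tree of depth h with all leaves at depth h, with transfer functions τ_v drawn independently from a distribution T that is balanced on average (Pr_{f,x}[f(x)=+1] = 1/2 for f drawn from T and x uniform). Then for any leaf ℓ with root path v_0 = ℓ, v_1, ..., v_h = r: E[Inf_ℓ(f_{h,r})] = prod_{i=1}^{h} E[Inf_{v_{i-1}}(τ_{v_i})], and moreover Pr_{T,x}[f_{h,r}(x) = +1] = 1/2. -/

import Mathlib

/-- Rooted directed trees in which all leaves are at depth `h`. -/
inductive BTree : ℕ → Type where
  | leaf : BTree 0
  | node : {h : ℕ} → (d : ℕ) → (Fin d → BTree h) → BTree (h + 1)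

/-- The (index type of the) leaves of a tree. -/
def BTree.Leaves : {h : ℕ} → BTree h → Type
  | _, .leaf => Unit
  | _, .node d c => Σ i : Fin d, (c i).Leaves

def BTree.leavesFintype : {h : ℕ} → (t : BTree h) → Fintype t.Leaves
  | _, .leaf => inferInstanceAs (Fintype Unit)
  | _, .node d c =>
      letI := fun i => (c i).leavesFintype
      inferInstanceAs (Fintype (Σ i : Fin d, (c i).Leaves))

instance instLeavesFintype {h : ℕ} (t : BTree h) : Fintype t.Leaves := t.leavesFintype

def BTree.leavesDecEq : {h : ℕ} → (t : BTree h) → DecidableEq t.Leaves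
  | _, .leaf => inferInstanceAs (DecidableEq Unit)
  | _, .node d c =>
      letI := fun i => (c i).leavesDecEq
      inferInstanceAs (DecidableEq (Σ i : Fin d, (c i).Leaves))

instance instLeavesDecEq {h : ℕ} (t : BTree h) : DecidableEq t.Leaves := t.leavesDecEq

/-- An assignment of a transfer function to every internal vertex of the tree:
a vertex with `d` children gets a function `(Fin d → Bool) → Bool` of its children. -/
def BTree.Labels : {h : ℕ} → BTree h → Type
  | _, .leaf => Unit
  | _, .node d c => ((Fin d → Bool) → Bool) × (∀ i : Fin d, (c i).Labels)

/-- The Boolean function computed at the root: each internal vertex applies its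
transfer function to the values of its children; leaves take the input values. -/
def BTree.eval : {h : ℕ} → (t : BTree h) → t.Labels → (t.Leaves → Bool) → Bool
  | _, .leaf, _, x => x ()
  | _, .node d c, L, x =>
      L.1 fun i => (c i).eval (L.2 i) fun ℓ => x ⟨i, ℓ⟩

/-- The influence of coordinate `i` on `f`: `Pr_x[f(x) ≠ f(x^{(i)})]`, `x` uniform. -/
noncomputable def infl {ι : Type*} [Fintype ι] [DecidableEq ι]
    (f : (ι → Bool) → Bool) (i : ι) : ℝ :=
  ((Finset.univ.filter fun x : ι → Bool => f x ≠ f (Function.update x i (!(x i)))).card : ℝ) /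
    2 ^ (Fintype.card ι)

/-- Expectation of a real random variable under a `PMF`. -/
noncomputable def pexp {α : Type*} (p : PMF α) (X : α → ℝ) : ℝ :=
  ∑' a, (p a).toReal * X a

/-- Product of `PMF`s over `Fin d` (independent coordinates). -/
noncomputable def pmfPi : {d : ℕ} → {α : Fin d → Type} → (∀ i, PMF (α i)) → PMF (∀ i, α i)
  | 0, _, _ => PMF.pure (fun i => i.elim0)
  | _ + 1, _, p =>
      (p 0).bind fun a => (pmfPi fun i => p i.succ).map fun g => Fin.cons a g

/-- Independently draw the transfer function of each internal vertex, the function of a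
`d`-ary vertex being drawn from `T d`. -/
noncomputable def labelPMF (T : ∀ d, PMF ((Fin d → Bool) → Bool)) :
    {h : ℕ} → (t : BTree h) → PMF t.Labels
  | _, .leaf => PMF.pure ()
  | _, .node d c =>
      (T d).bind fun f => (pmfPi fun i => labelPMF T (c i)).map fun Ls => (f, Ls)

/-- `pathProd T t ℓ` is `∏_{k=1}^{h} E[infl_{v_{k-1}}(τ_{v_k})]`, the product of the
expected influences along the path `v_0 = ℓ, v_1, …, v_h = root` from the leaf `ℓ`
to the root. -/
noncomputable def pathProd (T : ∀ d, PMF ((Fin d → Bool) → Bool)) :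
    {h : ℕ} → (t : BTree h) → t.Leaves → ℝ
  | _, .leaf, _ => 1
  | _, .node d c, ℓ => pexp (T d) (fun f => infl f ℓ.1) * pathProd T (c ℓ.1) ℓ.2


section pexpAux


variable {α β : Type*}

lemma pexp_fintype [Fintype α] (p : PMF α) (X : α → ℝ) :
    pexp p X = ∑ a, (p a).toReal * X a := tsum_fintype _

lemma sum_toReal_eq_one [Fintype α] (p : PMF α) : ∑ a, (p a).toReal = 1 := by
  rw [← ENNReal.toReal_sum (fun a _ => p.apply_ne_top a), ← tsum_fintype (L := .unconditional _), p.tsum_coe,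
    ENNReal.toReal_one]

lemma pexp_pure [Fintype α] (a : α) (X : α → ℝ) : pexp (PMF.pure a) X = X a := by
  classical
  rw [pexp_fintype]
  simp [PMF.pure_apply, Finset.sum_ite_eq', apply_ite ENNReal.toReal]

lemma pexp_bind [Fintype α] [Fintype β] (p : PMF α) (q : α → PMF β) (X : β → ℝ) :
    pexp (p.bind q) X = ∑ a, (p a).toReal * pexp (q a) X := by
  rw [pexp_fintype]
  have : ∀ b, ((p.bind q) b).toReal = ∑ a, (p a).toReal * ((q a) b).toReal := by
    intro b
    rw [PMF.bind_apply, tsum_fintype, ENNReal.toReal_sum]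
    · exact Finset.sum_congr rfl fun a _ => ENNReal.toReal_mul
    · exact fun a _ => ENNReal.mul_ne_top (p.apply_ne_top a) ((q a).apply_ne_top b)
  simp only [this, Finset.sum_mul]
  rw [Finset.sum_comm]
  refine Finset.sum_congr rfl fun a _ => ?_
  rw [pexp_fintype, Finset.mul_sum]
  exact Finset.sum_congr rfl fun b _ => by ring

lemma pexp_map [Fintype α] [Fintype β] (p : PMF α) (g : α → β) (X : β → ℝ) :
    pexp (p.map g) X = pexp p (fun a => X (g a)) := by
  rw [PMF.map, pexp_bind, pexp_fintype]
  exact Finset.sum_congr rfl fun a _ => by simp only [Function.comp_apply, pexp_pure]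

lemma pexp_const [Fintype α] (p : PMF α) (r : ℝ) : pexp p (fun _ => r) = r := by
  rw [pexp_fintype, ← Finset.sum_mul, sum_toReal_eq_one, one_mul]

lemma pexp_sum [Fintype α] (p : PMF α) {ι : Type*} (s : Finset ι) (X : ι → α → ℝ) :
    pexp p (fun a => ∑ i ∈ s, X i a) = ∑ i ∈ s, pexp p (X i) := by
  simp only [pexp_fintype, Finset.mul_sum]
  exact Finset.sum_comm

lemma pexp_mul_const [Fintype α] (p : PMF α) (X : α → ℝ) (r : ℝ) :
    pexp p (fun a => X a * r) = pexp p X * r := by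
  simp only [pexp_fintype, Finset.sum_mul, mul_assoc]

lemma pexp_one_sub [Fintype α] (p : PMF α) (X : α → ℝ) :
    pexp p (fun a => 1 - X a) = 1 - pexp p X := by
  simp only [pexp_fintype, mul_sub, mul_one, Finset.sum_sub_distrib, sum_toReal_eq_one]

end pexpAux

def BTree.labelsFintype : {h : ℕ} → (t : BTree h) → Fintype t.Labels
  | _, .leaf => inferInstanceAs (Fintype Unit)
  | _, .node d c =>
      letI := fun i => (c i).labelsFintype
      inferInstanceAs (Fintype (((Fin d → Bool) → Bool) × (∀ i : Fin d, (c i).Labels)))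

instance instLabelsFintype {h : ℕ} (t : BTree h) : Fintype t.Labels := t.labelsFintype

lemma pexp_pmfPi_prod : ∀ {d : ℕ} {α : Fin d → Type} [inst : ∀ i, Fintype (α i)]
    (p : ∀ i, PMF (α i)) (φ : ∀ i, α i → ℝ),
    pexp (pmfPi p) (fun g => ∏ i, φ i (g i)) = ∏ i, pexp (p i) (φ i)
  | 0, α, inst, p, φ => by
      simp only [pmfPi, Finset.univ_eq_empty, Finset.prod_empty]
      exact pexp_pure _ _
  | d + 1, α, inst, p, φ => by
      simp only [pmfPi]
      rw [pexp_bind]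
      have : ∀ a, pexp ((pmfPi fun i => p i.succ).map fun g => Fin.cons a g)
          (fun g => ∏ i, φ i (g i))
          = φ 0 a * ∏ i : Fin d, pexp (p i.succ) (fun x => φ i.succ x) := by
        intro a
        rw [pexp_map]
        have e1 : (fun g : ∀ i : Fin d, α i.succ => ∏ i, φ i (Fin.cons a g i))
            = fun g => φ 0 a * ∏ i : Fin d, φ i.succ (g i) := by
          funext g
          rw [Fin.prod_univ_succ]
          simp
        rw [e1]
        have := pexp_pmfPi_prod (fun i : Fin d => p i.succ) (fun i x => φ i.succ x)
        calc pexp (pmfPi fun i => p i.succ) (fun g => φ 0 a * ∏ i : Fin d, φ i.succ (g i))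
            = φ 0 a * pexp (pmfPi fun i => p i.succ) (fun g => ∏ i : Fin d, φ i.succ (g i)) := by
              simp only [pexp_fintype, Finset.mul_sum]
              exact Finset.sum_congr rfl fun g _ => by ring
          _ = φ 0 a * ∏ i : Fin d, pexp (p i.succ) (fun x => φ i.succ x) := by rw [this]
      simp only [this]
      rw [Fin.prod_univ_succ, pexp_fintype (p 0)]
      simp only [Finset.sum_mul]
      exact Finset.sum_congr rfl fun a _ => by ring

lemma card_filter_equiv {α γ : Type*} [Fintype α] [Fintype γ] [DecidableEq γ] (e : α ≃ γ)
    (p : α → Prop) [DecidablePred p] [DecidablePred (fun x => p (e.symm x))] :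
    (Finset.univ.filter p).card = (Finset.univ.filter fun x : γ => p (e.symm x)).card := by
  refine Finset.card_bij (fun a _ => e a) (fun a ha => ?_) (fun a _ b _ hab => ?_)
    (fun b hb => ⟨e.symm b, ?_, by simp⟩)
  · simp only [Finset.mem_filter, Finset.mem_univ, true_and, Equiv.symm_apply_apply]
    exact (Finset.mem_filter.mp ha).2
  · exact e.injective hab
  · simpa using hb

open Finset in
lemma count_fiber {d : ℕ} {β : Fin d → Type*} [∀ i, Fintype (β i)]
    (ψ : ∀ i, β i → Bool) (Q : ∀ i, β i → Prop) [∀ i, DecidablePred (Q i)]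
    (P : (Fin d → Bool) → Prop) [DecidablePred P]
    [DecidablePred fun z : ∀ i, β i => P (fun i => ψ i (z i)) ∧ ∀ i, Q i (z i)] :
    ((univ : Finset (∀ i, β i)).filter fun z => P (fun i => ψ i (z i)) ∧ ∀ i, Q i (z i)).card
      = ∑ y : Fin d → Bool, if P y then
          ∏ i, (univ.filter fun w : β i => Q i w ∧ ψ i w = y i).card else 0 := by
  classical
  rw [Finset.card_eq_sum_card_fiberwise
    (f := fun z => fun i => ψ i (z i)) (t := univ) (fun _ _ => mem_univ _)]
  refine Finset.sum_congr rfl fun y _ => ?_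
  rw [Finset.filter_filter]
  by_cases hy : P y
  · rw [if_pos hy]
    have hset : ((univ : Finset (∀ i, β i)).filter
          fun z => (P (fun i => ψ i (z i)) ∧ ∀ i, Q i (z i)) ∧ (fun i => ψ i (z i)) = y)
        = Fintype.piFinset fun i => univ.filter fun w : β i => Q i w ∧ ψ i w = y i := by
      ext z
      simp only [mem_filter, mem_univ, true_and, Fintype.mem_piFinset, funext_iff]
      constructor
      · rintro ⟨⟨_, hQ⟩, hy'⟩ i; exact ⟨hQ i, hy' i⟩
      · intro hz
        have h1 : ∀ i, ψ i (z i) = y i := fun i => (hz i).2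
        exact ⟨⟨by rw [funext h1]; exact hy, fun i => (hz i).1⟩, h1⟩
    rw [hset, Fintype.card_piFinset]
  · rw [if_neg hy, Finset.card_eq_zero, Finset.filter_eq_empty_iff]
    rintro z _ ⟨⟨hP, _⟩, hy'⟩
    exact hy (by rwa [show (fun i => ψ i (z i)) = y from hy'] at hP)

lemma flip_flip' {d : ℕ} (j : Fin d) (y : Fin d → Bool) :
    Function.update (Function.update y j (!y j)) j (!(Function.update y j (!y j) j)) = y := by
  funext i
  rcases eq_or_ne i j with rfl | hij
  · simp
  · simp [Function.update_of_ne hij]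

lemma sum_flip {d : ℕ} (j : Fin d) (G : (Fin d → Bool) → ℝ) :
    ∑ y : Fin d → Bool, G y
      = ∑ y : Fin d → Bool, G (Function.update y j (!y j)) := by
  have hinv : Function.Involutive (fun y : Fin d → Bool => Function.update y j (!y j)) :=
    fun y => flip_flip' j y
  exact (Fintype.sum_equiv hinv.toPerm
    (fun y => G (Function.update y j (!y j))) G (fun y => rfl)).symm

lemma sigma_update_ne {d : ℕ} {β : Fin d → Type*} [DecidableEq ((i : Fin d) × β i)]
    [∀ i, DecidableEq (β i)]
    (x : ((i : Fin d) × β i) → Bool) {i j : Fin d} (hij : i ≠ j) (m : β j) (b : Bool) :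
    (fun w : β i => Function.update x ⟨j, m⟩ b ⟨i, w⟩) = fun w => x ⟨i, w⟩ := by
  funext w
  exact Function.update_of_ne (fun hc => hij (congrArg Sigma.fst hc)) _ _

lemma sigma_update_eq {d : ℕ} {β : Fin d → Type*} [DecidableEq ((i : Fin d) × β i)]
    [∀ i, DecidableEq (β i)]
    (x : ((i : Fin d) × β i) → Bool) (j : Fin d) (m : β j) (b : Bool) :
    (fun w : β j => Function.update x ⟨j, m⟩ b ⟨j, w⟩)
      = Function.update (fun w => x ⟨j, w⟩) m b := by
  funext w
  rcases eq_or_ne w m with rfl | hw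
  · simp
  · rw [Function.update_of_ne hw,
      Function.update_of_ne (fun hc => hw (by simpa using hc))]

lemma bool_flip_iff {ι : Type*} [DecidableEq ι] (f : (ι → Bool) → Bool)
    (g : ι → Bool) (j : ι) (v : Bool) :
    (f g ≠ f (Function.update g j v))
      ↔ ((f g ≠ f (Function.update g j (!g j))) ∧ g j ≠ v) := by
  rcases eq_or_ne (g j) v with hv | hv
  · rw [← hv, Function.update_eq_self]
    simp
  · have hvb : v = !(g j) := by cases v <;> cases hjg : g j <;> simp_all
    have h2 : g j ≠ v := hv
    rw [hvb]
    exact (and_iff_left (by rw [hvb] at h2; exact h2)).symm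

lemma card_filter_irrel {γ : Type*} [Fintype γ] (p q : γ → Prop) (h1 : DecidablePred p)
    (h2 : DecidablePred q) (hpq : ∀ x, p x ↔ q x) :
    (@Finset.filter γ p h1 Finset.univ).card = (@Finset.filter γ q h2 Finset.univ).card := by
  have hq : q = p := funext fun x => propext (hpq x).symm
  subst hq
  have hi : h1 = h2 := Subsingleton.elim _ _
  subst hi
  rfl

lemma card_split_bool {γ : Type*} [Fintype γ] (A : γ → Prop) (v : γ → Bool)
    [DecidablePred A]
    [DecidablePred fun w => A w ∧ v w = true] [DecidablePred fun w => A w ∧ v w = false] :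
    (Finset.univ.filter fun w => A w ∧ v w = true).card
      + (Finset.univ.filter fun w => A w ∧ v w = false).card
      = (Finset.univ.filter A).card := by
  classical
  have h1 := Finset.card_filter_add_card_filter_not
    (s := Finset.univ.filter A) (p := fun w => v w = true)
  rw [Finset.filter_filter, Finset.filter_filter] at h1
  rw [← h1]
  congr 1
  · exact card_filter_irrel _ _ _ _ fun x => Iff.rfl
  · exact card_filter_irrel _ _ _ _ fun x => by simp

theorem main_lemma (T : ∀ d, PMF ((Fin d → Bool) → Bool))
    (hbal : ∀ d, pexp (T d)
        (fun f => ((Finset.univ.filter fun x : Fin d → Bool => f x = true).card : ℝ) / 2 ^ d)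
      = 1 / 2) :
    ∀ {h : ℕ} (t : BTree h),
      (∀ ℓ : t.Leaves,
        pexp (labelPMF T t) (fun L => infl (t.eval L) ℓ) = pathProd T t ℓ) ∧
      pexp (labelPMF T t)
          (fun L => ((Finset.univ.filter fun x : t.Leaves → Bool => t.eval L x = true).card : ℝ) /
            2 ^ (Fintype.card t.Leaves))
        = 1 / 2 := by
  intro h t
  induction t with
  | leaf =>
      constructor
      · intro ℓ
        have : labelPMF T BTree.leaf = PMF.pure () := rfl
        rw [this]
        refine (pexp_pure (α := Unit) _ _).trans ?_
        cases ℓ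
        show infl (BTree.eval BTree.leaf ()) () = 1
        simp only [infl]
        norm_num [show (Finset.univ.filter fun x : BTree.leaf.Leaves → Bool =>
            BTree.eval BTree.leaf () x ≠ BTree.eval BTree.leaf ()
              (Function.update x () (!x ()))).card = 2 from by decide,
          show Fintype.card BTree.leaf.Leaves = 1 from by decide]
      · have : labelPMF T BTree.leaf = PMF.pure () := rfl
        rw [this]
        refine (pexp_pure (α := Unit) _ _).trans ?_
        norm_num [show (Finset.univ.filter fun x : BTree.leaf.Leaves → Bool =>
            BTree.eval BTree.leaf () x = true).card = 1 from by decide,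
          show Fintype.card BTree.leaf.Leaves = 1 from by decide]
  | node d c IH =>
      classical
      have hnode : ∀ X : (BTree.node d c).Labels → ℝ,
          pexp (labelPMF T (BTree.node d c)) X
            = ∑ f, ((T d) f).toReal *
                pexp (pmfPi fun i => labelPMF T (c i)) (fun Ls => X (f, Ls)) := by
        intro X
        have hrfl : labelPMF T (BTree.node d c)
            = (T d).bind fun f => (pmfPi fun i => labelPMF T (c i)).map fun Ls => (f, Ls) := rfl
        rw [hrfl]
        refine (pexp_bind (T d) _ X).trans ?_
        exact Finset.sum_congr rfl fun f _ => congrArg _ (pexp_map _ _ X)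
      let e : ((BTree.node d c).Leaves → Bool) ≃ (∀ i, (c i).Leaves → Bool) :=
        Equiv.piCurry fun _ _ => Bool
      have hN : (2 : ℝ) ^ (Fintype.card (BTree.node d c).Leaves)
          = ∏ i, (2:ℝ) ^ (Fintype.card (c i).Leaves) := by
        rw [Finset.prod_pow_eq_pow_sum]
        congr 1
        rw [show Fintype.card (BTree.node d c).Leaves
            = Fintype.card (Σ i, (c i).Leaves) from Fintype.card_congr (Equiv.refl _)]
        exact Fintype.card_sigma
      have hhalf : ∀ (i : Fin d) (b : Bool), pexp (labelPMF T (c i))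
          (fun L => ((Finset.univ.filter fun w : (c i).Leaves → Bool =>
              (c i).eval L w = b).card : ℝ) / 2 ^ (Fintype.card (c i).Leaves)) = 1/2 := by
        intro i b
        cases b
        · have hcompl : ∀ L : (c i).Labels,
              ((Finset.univ.filter fun w : (c i).Leaves → Bool =>
                  (c i).eval L w = false).card : ℝ) / 2 ^ (Fintype.card (c i).Leaves)
              = 1 - ((Finset.univ.filter fun w : (c i).Leaves → Bool =>
                  (c i).eval L w = true).card : ℝ) / 2 ^ (Fintype.card (c i).Leaves) := by
            intro L
            have hadd : (Finset.univ.filter fun w : (c i).Leaves → Bool =>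
                  (c i).eval L w = true).card
                + (Finset.univ.filter fun w : (c i).Leaves → Bool =>
                  (c i).eval L w = false).card
                = 2 ^ (Fintype.card (c i).Leaves) := by
              rw [show (Finset.univ.filter fun w : (c i).Leaves → Bool =>
                    (c i).eval L w = false)
                  = (Finset.univ.filter fun w : (c i).Leaves → Bool =>
                    ¬ ((c i).eval L w = true)) from
                Finset.filter_congr fun w _ => by simp,
                Finset.card_filter_add_card_filter_not, Finset.card_univ,
                Fintype.card_fun, Fintype.card_bool]
            rw [eq_sub_iff_add_eq, ← add_div, div_eq_one_iff_eq (by positivity)]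
            exact_mod_cast by omega
          simp only [hcompl]
          rw [pexp_one_sub, (IH i).2]
          norm_num
        · exact (IH i).2
      have heval : ∀ (f : (Fin d → Bool) → Bool) (Ls : ∀ i, (c i).Labels)
          (z : ∀ i, (c i).Leaves → Bool),
          (BTree.node d c).eval (f, Ls) (e.symm z)
            = f (fun i => (c i).eval (Ls i) (z i)) := fun _ _ _ => rfl
      have key2 : ∀ (f : (Fin d → Bool) → Bool) (Ls : ∀ i, (c i).Labels),
          ((Finset.univ.filter fun x : (BTree.node d c).Leaves → Bool =>
              (BTree.node d c).eval (f, Ls) x = true).card : ℝ)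
            / 2 ^ (Fintype.card (BTree.node d c).Leaves)
          = ∑ y : Fin d → Bool, if f y = true then
              ∏ i, ((Finset.univ.filter fun w : (c i).Leaves → Bool =>
                (c i).eval (Ls i) w = y i).card : ℝ) / 2 ^ (Fintype.card (c i).Leaves)
            else 0 := by
        intro f Ls
        have hnum : (Finset.univ.filter fun x : (BTree.node d c).Leaves → Bool =>
              (BTree.node d c).eval (f, Ls) x = true).card
            = ∑ y : Fin d → Bool, if f y = true then
                ∏ i, (Finset.univ.filter fun w : (c i).Leaves → Bool =>
                  (c i).eval (Ls i) w = y i).card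
              else 0 := by
          rw [card_filter_equiv e]
          rw [Finset.filter_congr (q := fun z : ∀ i, (c i).Leaves → Bool =>
              (fun y => f y = true) (fun i => (c i).eval (Ls i) (z i))
                ∧ ∀ i : Fin d, (fun _ : (c i).Leaves → Bool => True) (z i))
            (fun z _ => by simp [heval f Ls z])]
          rw [count_fiber (fun i w => (c i).eval (Ls i) w)
            (fun i (_ : (c i).Leaves → Bool) => True) (fun y => f y = true)]
          simp only [true_and]
        rw [hnum, hN]
        push_cast
        rw [Finset.sum_div]
        refine Finset.sum_congr rfl fun y _ => ?_
        by_cases hf : f y = true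
        · rw [if_pos hf, if_pos hf, Finset.prod_div_distrib]
        · rw [if_neg hf, if_neg hf, zero_div]
      have part2 : pexp (labelPMF T (BTree.node d c))
          (fun L => ((Finset.univ.filter fun x : (BTree.node d c).Leaves → Bool =>
              (BTree.node d c).eval L x = true).card : ℝ)
            / 2 ^ (Fintype.card (BTree.node d c).Leaves)) = 1/2 := by
        rw [hnode]
        have step : ∀ f : (Fin d → Bool) → Bool,
            pexp (pmfPi fun i => labelPMF T (c i)) (fun Ls =>
              ((Finset.univ.filter fun x : (BTree.node d c).Leaves → Bool =>
                  (BTree.node d c).eval (f, Ls) x = true).card : ℝ)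
                / 2 ^ (Fintype.card (BTree.node d c).Leaves))
            = ((Finset.univ.filter fun y : Fin d → Bool => f y = true).card : ℝ) / 2 ^ d := by
          intro f
          simp only [key2 f]
          rw [pexp_sum]
          have hy : ∀ y : Fin d → Bool,
              pexp (pmfPi fun i => labelPMF T (c i)) (fun Ls => if f y = true then
                ∏ i, ((Finset.univ.filter fun w : (c i).Leaves → Bool =>
                  (c i).eval (Ls i) w = y i).card : ℝ) / 2 ^ (Fintype.card (c i).Leaves) else 0)
              = if f y = true then (1/2 : ℝ) ^ d else 0 := by
            intro y
            by_cases hf : f y = true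
            · simp only [if_pos hf]
              rw [pexp_pmfPi_prod (fun i => labelPMF T (c i))
                (fun i L => ((Finset.univ.filter fun w : (c i).Leaves → Bool =>
                  (c i).eval L w = y i).card : ℝ) / 2 ^ (Fintype.card (c i).Leaves))]
              simp only [hhalf]
              rw [Finset.prod_const, Finset.card_univ, Fintype.card_fin]
            · simp only [if_neg hf]
              exact pexp_const _ 0
          simp only [hy]
          rw [Finset.sum_ite, Finset.sum_const, Finset.sum_const_zero, add_zero, nsmul_eq_mul]
          rw [one_div, inv_pow, div_eq_mul_inv]
        simp only [step]
        rw [← pexp_fintype]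
        exact hbal d
      refine ⟨?_, part2⟩
      intro ℓ
      obtain ⟨j, ℓ'⟩ := ℓ
      obtain ⟨Qf, hQj, hQi⟩ : ∃ Qf : ∀ i : Fin d, (c i).Labels → ((c i).Leaves → Bool) → Prop,
          (Qf j = fun L w => (c j).eval L w
              ≠ (c j).eval L (Function.update w ℓ' (!w ℓ')))
          ∧ ∀ i, i ≠ j → Qf i = fun _ _ => True :=
        ⟨Function.update (fun _ _ _ => True) j
            (fun L w => (c j).eval L w ≠ (c j).eval L (Function.update w ℓ' (!w ℓ'))),
          Function.update_self _ _ _, fun i hij => Function.update_of_ne hij _ _⟩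
      have hupd_ne : ∀ (x : (BTree.node d c).Leaves → Bool) (i : Fin d), i ≠ j → ∀ b : Bool,
          (fun w : (c i).Leaves => Function.update x ⟨j, ℓ'⟩ b ⟨i, w⟩) = fun w => x ⟨i, w⟩ :=
        fun x i hij b => sigma_update_ne (β := fun i => (c i).Leaves) x hij ℓ' b
      have hupd_eq : ∀ (x : (BTree.node d c).Leaves → Bool) (b : Bool),
          (fun w : (c j).Leaves => Function.update x ⟨j, ℓ'⟩ b ⟨j, w⟩)
            = Function.update (fun w => x ⟨j, w⟩) ℓ' b :=
        fun x b => sigma_update_eq (β := fun i => (c i).Leaves) x j ℓ' b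
      have key1 : ∀ (f : (Fin d → Bool) → Bool) (Ls : ∀ i, (c i).Labels),
          infl ((BTree.node d c).eval (f, Ls)) ⟨j, ℓ'⟩
          = ∑ y : Fin d → Bool, if f y ≠ f (Function.update y j (!y j)) then
              ∏ i, ((Finset.univ.filter fun w : (c i).Leaves → Bool =>
                Qf i (Ls i) w ∧ (c i).eval (Ls i) w = y i).card : ℝ)
                / 2 ^ (Fintype.card (c i).Leaves)
            else 0 := by
        intro f Ls
        have hiff : ∀ z : ∀ i, (c i).Leaves → Bool,
            ((BTree.node d c).eval (f, Ls) (e.symm z)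
              ≠ (BTree.node d c).eval (f, Ls) (Function.update (e.symm z) ⟨j, ℓ'⟩
                  (!(e.symm z ⟨j, ℓ'⟩))))
            ↔ ((fun y => f y ≠ f (Function.update y j (!y j)))
                  (fun i => (c i).eval (Ls i) (z i))
                ∧ ∀ i, Qf i (Ls i) (z i)) := by
          intro z
          have hx' : (BTree.node d c).eval (f, Ls)
              (Function.update (e.symm z) ⟨j, ℓ'⟩ (!(e.symm z ⟨j, ℓ'⟩)))
              = f (Function.update (fun i => (c i).eval (Ls i) (z i)) j
                  ((c j).eval (Ls j) (Function.update (z j) ℓ' (!(z j ℓ'))))) := by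
            show f (fun i => (c i).eval (Ls i)
                (fun m => Function.update (e.symm z) ⟨j, ℓ'⟩ (!(e.symm z ⟨j, ℓ'⟩)) ⟨i, m⟩)) = _
            congr 1
            funext i
            rcases eq_or_ne i j with heq | hij
            · subst heq
              rw [hupd_eq (e.symm z) (!(e.symm z ⟨i, ℓ'⟩)), Function.update_self]
              rfl
            · rw [hupd_ne (e.symm z) i hij (!(e.symm z ⟨j, ℓ'⟩)), Function.update_of_ne hij]
              rfl
          have heq : (BTree.node d c).eval (f, Ls) (e.symm z)
              = f (fun i => (c i).eval (Ls i) (z i)) := heval f Ls z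
          rw [heq, hx', bool_flip_iff]
          refine and_congr Iff.rfl ?_
          constructor
          · intro hne i
            rcases eq_or_ne i j with rfl | hij
            · rw [hQj]; exact hne
            · rw [hQi i hij]; trivial
          · intro H
            have hj := H j; rw [hQj] at hj; exact hj
        simp only [infl]
        rw [card_filter_equiv e (fun x : (BTree.node d c).Leaves → Bool =>
            (BTree.node d c).eval (f, Ls) x ≠ (BTree.node d c).eval (f, Ls)
              (Function.update x ⟨j, ℓ'⟩ (!x ⟨j, ℓ'⟩)))]
        rw [Finset.filter_congr (fun z _ => hiff z)]
        rw [count_fiber (fun i w => (c i).eval (Ls i) w) (fun i w => Qf i (Ls i) w)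
          (fun y => f y ≠ f (Function.update y j (!y j)))]
        rw [hN]
        push_cast
        rw [Finset.sum_div]
        refine Finset.sum_congr rfl fun y _ => ?_
        by_cases hf : f y ≠ f (Function.update y j (!y j))
        · rw [if_pos hf, if_pos hf, Finset.prod_div_distrib]
        · rw [if_neg hf, if_neg hf, zero_div]
      have hEne : ∀ (i : Fin d), i ≠ j → ∀ b : Bool,
          pexp (labelPMF T (c i)) (fun L => ((Finset.univ.filter fun w : (c i).Leaves → Bool =>
              Qf i L w ∧ (c i).eval L w = b).card : ℝ) / 2 ^ (Fintype.card (c i).Leaves))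
            = 1/2 := by
        intro i hij b
        simp only [hQi i hij, true_and]
        exact hhalf i b
      have hEj : pexp (labelPMF T (c j)) (fun L => ((Finset.univ.filter
              fun w : (c j).Leaves → Bool =>
              Qf j L w ∧ (c j).eval L w = true).card : ℝ) / 2 ^ (Fintype.card (c j).Leaves))
          + pexp (labelPMF T (c j)) (fun L => ((Finset.univ.filter
              fun w : (c j).Leaves → Bool =>
              Qf j L w ∧ (c j).eval L w = false).card : ℝ) / 2 ^ (Fintype.card (c j).Leaves))
          = pathProd T (c j) ℓ' := by
        rw [← (IH j).1 ℓ']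
        rw [pexp_fintype, pexp_fintype, pexp_fintype, ← Finset.sum_add_distrib]
        refine Finset.sum_congr rfl fun L _ => ?_
        rw [← mul_add, ← add_div]
        congr 1
        simp only [infl]
        congr 1
        rw [← Nat.cast_add]
        congr 1
        simp only [hQj]
        exact card_split_bool _ _
      rw [hnode]
      have step1 : ∀ f : (Fin d → Bool) → Bool,
          pexp (pmfPi fun i => labelPMF T (c i))
            (fun Ls => infl ((BTree.node d c).eval (f, Ls)) ⟨j, ℓ'⟩)
          = ((Finset.univ.filter fun y : Fin d → Bool =>
                f y ≠ f (Function.update y j (!y j))).card : ℝ) / 2 ^ d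
              * pathProd T (c j) ℓ' := by
        intro f
        simp only [key1 f]
        rw [pexp_sum]
        have hy : ∀ y : Fin d → Bool,
            pexp (pmfPi fun i => labelPMF T (c i)) (fun Ls =>
              if f y ≠ f (Function.update y j (!y j)) then
                ∏ i, ((Finset.univ.filter fun w : (c i).Leaves → Bool =>
                  Qf i (Ls i) w ∧ (c i).eval (Ls i) w = y i).card : ℝ)
                  / 2 ^ (Fintype.card (c i).Leaves)
              else 0)
            = if f y ≠ f (Function.update y j (!y j)) then
                (1/2 : ℝ) ^ (d - 1) * pexp (labelPMF T (c j))
                  (fun L => ((Finset.univ.filter fun w : (c j).Leaves → Bool =>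
                    Qf j L w ∧ (c j).eval L w = y j).card : ℝ)
                    / 2 ^ (Fintype.card (c j).Leaves))
              else 0 := by
          intro y
          by_cases hC : f y ≠ f (Function.update y j (!y j))
          · simp only [if_pos hC]
            rw [pexp_pmfPi_prod (fun i => labelPMF T (c i))
              (fun i L => ((Finset.univ.filter fun w : (c i).Leaves → Bool =>
                Qf i L w ∧ (c i).eval L w = y i).card : ℝ)
                / 2 ^ (Fintype.card (c i).Leaves))]
            rw [← Finset.prod_erase_mul Finset.univ _ (Finset.mem_univ j)]
            rw [Finset.prod_congr rfl (fun i hi => hEne i (Finset.ne_of_mem_erase hi) (y i)),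
              Finset.prod_const, Finset.card_erase_of_mem (Finset.mem_univ j),
              Finset.card_univ, Fintype.card_fin]
          · simp only [if_neg hC]
            exact pexp_const _ 0
        simp only [hy]
        have hflipc : ∀ y : Fin d → Bool,
            (f (Function.update y j (!y j)) ≠ f (Function.update (Function.update y j (!y j)) j
                (!(Function.update y j (!y j) j))))
            ↔ (f y ≠ f (Function.update y j (!y j))) := by
          intro y
          rw [flip_flip']
          exact ne_comm
        have h2S : (2:ℝ) * (∑ y : Fin d → Bool, if f y ≠ f (Function.update y j (!y j)) then
              (1/2 : ℝ) ^ (d - 1) * pexp (labelPMF T (c j))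
                (fun L => ((Finset.univ.filter fun w : (c j).Leaves → Bool =>
                  Qf j L w ∧ (c j).eval L w = y j).card : ℝ)
                  / 2 ^ (Fintype.card (c j).Leaves))
            else 0)
            = ∑ y : Fin d → Bool, if f y ≠ f (Function.update y j (!y j)) then
                (1/2 : ℝ) ^ (d - 1) * pathProd T (c j) ℓ'
              else 0 := by
          rw [two_mul]
          nth_rewrite 2 [sum_flip j]
          rw [← Finset.sum_add_distrib]
          refine Finset.sum_congr rfl fun y _ => ?_
          rw [if_congr (hflipc y) rfl rfl]
          simp only [Function.update_self]
          by_cases hC : f y ≠ f (Function.update y j (!y j))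
          · rw [if_pos hC, if_pos hC, if_pos hC, ← hEj]
            cases hyj : y j
            · simp only [Bool.not_false]
              ring
            · simp only [Bool.not_true]
              ring
          · rw [if_neg hC, if_neg hC, if_neg hC, add_zero]
        have hS := h2S
        have hd1 : ((1:ℝ)/2) ^ (d - 1) / 2 = 1 / 2 ^ d := by
          have hd : d - 1 + 1 = d := Nat.succ_pred_eq_of_pos j.pos
          calc ((1:ℝ)/2) ^ (d - 1) / 2 = (1/2) ^ (d - 1) * (1/2) := by ring
            _ = (1/2) ^ (d - 1 + 1) := (pow_succ _ _).symm
            _ = (1/2 : ℝ) ^ d := by rw [hd]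
            _ = 1 / 2 ^ d := by rw [div_pow, one_pow]
        have hSle : (∑ y : Fin d → Bool, if f y ≠ f (Function.update y j (!y j)) then
              (1/2 : ℝ) ^ (d - 1) * pexp (labelPMF T (c j))
                (fun L => ((Finset.univ.filter fun w : (c j).Leaves → Bool =>
                  Qf j L w ∧ (c j).eval L w = y j).card : ℝ)
                  / 2 ^ (Fintype.card (c j).Leaves))
            else 0)
            = (∑ y : Fin d → Bool, if f y ≠ f (Function.update y j (!y j)) then
                (1/2 : ℝ) ^ (d - 1) * pathProd T (c j) ℓ'
              else 0) / 2 := by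
          rw [← hS]
          ring
        rw [hSle]
        rw [Finset.sum_ite, Finset.sum_const, Finset.sum_const_zero, add_zero, nsmul_eq_mul]
        have hd : d - 1 + 1 = d := Nat.succ_pred_eq_of_pos j.pos
        have h2d : (2:ℝ) ^ d = 2 ^ (d - 1) * 2 := by rw [← pow_succ, hd]
        rw [h2d, div_pow, one_pow]
        have hne : (2:ℝ) ^ (d - 1) ≠ 0 := by positivity
        field_simp
      simp only [step1]
      rw [show pathProd T (BTree.node d c) ⟨j, ℓ'⟩
          = pexp (T d) (fun f => infl f j) * pathProd T (c j) ℓ' from rfl]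
      rw [pexp_fintype (T d), Finset.sum_mul]
      refine Finset.sum_congr rfl fun f _ => ?_
      rw [show infl f j = ((Finset.univ.filter fun y : Fin d → Bool =>
          f y ≠ f (Function.update y j (!y j))).card : ℝ) / 2 ^ d from by
        simp only [infl, Fintype.card_fin]]
      ring

/-- For a tree of depth `h` whose transfer functions are drawn independently from a
family `T` that is balanced on average (`Pr_{f,x}[f(x) = +1] = 1/2` in each arity),
the expected influence of a leaf on the root function equals the product of expected
edge influences along the leaf-to-root path, and moreover the root's value on a
uniform random input is `+1` with probability `1/2`. -/
theorem stmt13 (T : ∀ d, PMF ((Fin d → Bool) → Bool))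
    (hbal : ∀ d, pexp (T d)
        (fun f => ((Finset.univ.filter fun x : Fin d → Bool => f x = true).card : ℝ) / 2 ^ d)
      = 1 / 2)
    {h : ℕ} (t : BTree h) (ℓ : t.Leaves) :
    pexp (labelPMF T t) (fun L => infl (t.eval L) ℓ) = pathProd T t ℓ ∧
    pexp (labelPMF T t)
        (fun L => ((Finset.univ.filter fun x : t.Leaves → Bool => t.eval L x = true).card : ℝ) /
          2 ^ (Fintype.card t.Leaves))
      = 1 / 2 := by
  exact ⟨(main_lemma T hbal t).1 ℓ, (main_lemma T hbal t).2⟩
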